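/- The strong-force collinear potential U(ξ₁,ξ₂,ξ₃) = Σ_{1≤i<j≤3}[(ξᵢ−ξⱼ)^{-2} + (ξᵢ+ξⱼ)^{-2}] satisfies ΔU-convexity of its logarithm: Δ log U > 0 at every point where all ξᵢ ± ξⱼ ≠ 0, where Δ = ∂₁² + ∂₂² + ∂₃² is the Euclidean Laplacian. -/

import Mathlib

/-- The strong-force collinear potential in the coordinates `ξ₁, ξ₂, ξ₃`. -/
noncomputable def Ucol (a b c : ℝ) : ℝ :=
  1 / (a - b) ^ 2 + 1 / (a + b) ^ 2 + 1 / (a - c) ^ 2 + 1 / (a + c) ^ 2 +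
    1 / (b - c) ^ 2 + 1 / (b + c) ^ 2

/-- The Euclidean Laplacian of a function of three real variables. -/
noncomputable def lap3 (g : ℝ → ℝ → ℝ → ℝ) (a b c : ℝ) : ℝ :=
  deriv (fun t => deriv (fun s => g s b c) t) a +
    deriv (fun t => deriv (fun s => g a s c) t) b +
    deriv (fun t => deriv (fun s => g a b s) t) c

noncomputable def Vc1 (a b c : ℝ) : ℝ := -2/(a-b)^3 + -2/(a+b)^3 + -2/(a-c)^3 + -2/(a+c)^3
noncomputable def Vc2 (a b c : ℝ) : ℝ := 2/(a-b)^3 + -2/(a+b)^3 + -2/(b-c)^3 + -2/(b+c)^3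
noncomputable def Vc3 (a b c : ℝ) : ℝ := 2/(a-c)^3 + -2/(a+c)^3 + 2/(b-c)^3 + -2/(b+c)^3
noncomputable def Ac1 (a b c : ℝ) : ℝ := 6/(a-b)^4 + 6/(a+b)^4 + 6/(a-c)^4 + 6/(a+c)^4
noncomputable def Ac2 (a b c : ℝ) : ℝ := 6/(a-b)^4 + 6/(a+b)^4 + 6/(b-c)^4 + 6/(b+c)^4
noncomputable def Ac3 (a b c : ℝ) : ℝ := 6/(a-c)^4 + 6/(a+c)^4 + 6/(b-c)^4 + 6/(b+c)^4

lemma hd_m2 (d t : ℝ) (h : t - d ≠ 0) :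
    HasDerivAt (fun s => 1/(s-d)^2) (-2/(t-d)^3) t := by
  have h1 : HasDerivAt (fun s : ℝ => s - d) 1 t := (hasDerivAt_id t).sub_const d
  have h3 := (h1.fun_pow 2).fun_inv (pow_ne_zero 2 h)
  have e2 : (fun s : ℝ => 1/(s-d)^2) = fun s => ((s-d)^2)⁻¹ := by
    funext s; rw [one_div]
  rw [e2]; refine h3.congr_deriv ?_; push_cast; field_simp

lemma hd_p2 (d t : ℝ) (h : t + d ≠ 0) :
    HasDerivAt (fun s => 1/(s+d)^2) (-2/(t+d)^3) t := by
  have h1 : HasDerivAt (fun s : ℝ => s + d) 1 t := (hasDerivAt_id t).add_const d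
  have h3 := (h1.fun_pow 2).fun_inv (pow_ne_zero 2 h)
  have e2 : (fun s : ℝ => 1/(s+d)^2) = fun s => ((s+d)^2)⁻¹ := by
    funext s; rw [one_div]
  rw [e2]; refine h3.congr_deriv ?_; push_cast; field_simp

lemma hd_c2 (d t : ℝ) (h : d - t ≠ 0) :
    HasDerivAt (fun s => 1/(d-s)^2) (2/(d-t)^3) t := by
  have h1 : HasDerivAt (fun s : ℝ => d - s) (-1) t := (hasDerivAt_id t).const_sub d
  have h3 := (h1.fun_pow 2).fun_inv (pow_ne_zero 2 h)
  have e2 : (fun s : ℝ => 1/(d-s)^2) = fun s => ((d-s)^2)⁻¹ := by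
    funext s; rw [one_div]
  rw [e2]; refine h3.congr_deriv ?_; push_cast; field_simp

lemma hd_m3 (d t : ℝ) (h : t - d ≠ 0) :
    HasDerivAt (fun s => -2/(s-d)^3) (6/(t-d)^4) t := by
  have h1 : HasDerivAt (fun s : ℝ => s - d) 1 t := (hasDerivAt_id t).sub_const d
  have h3 := (((h1.fun_pow 3).fun_inv (pow_ne_zero 3 h)).const_mul (-2))
  have e2 : (fun s : ℝ => -2/(s-d)^3) = fun s => (-2) * ((s-d)^3)⁻¹ := by
    funext s; rw [div_eq_mul_inv]
  rw [e2]; refine h3.congr_deriv ?_; push_cast; field_simp; ring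

lemma hd_p3 (d t : ℝ) (h : t + d ≠ 0) :
    HasDerivAt (fun s => -2/(s+d)^3) (6/(t+d)^4) t := by
  have h1 : HasDerivAt (fun s : ℝ => s + d) 1 t := (hasDerivAt_id t).add_const d
  have h3 := (((h1.fun_pow 3).fun_inv (pow_ne_zero 3 h)).const_mul (-2))
  have e2 : (fun s : ℝ => -2/(s+d)^3) = fun s => (-2) * ((s+d)^3)⁻¹ := by
    funext s; rw [div_eq_mul_inv]
  rw [e2]; refine h3.congr_deriv ?_; push_cast; field_simp; ring

lemma hd_c3 (d t : ℝ) (h : d - t ≠ 0) :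
    HasDerivAt (fun s => 2/(d-s)^3) (6/(d-t)^4) t := by
  have h1 : HasDerivAt (fun s : ℝ => d - s) (-1) t := (hasDerivAt_id t).const_sub d
  have h3 := (((h1.fun_pow 3).fun_inv (pow_ne_zero 3 h)).const_mul 2)
  have e2 : (fun s : ℝ => 2/(d-s)^3) = fun s => (2:ℝ) * ((d-s)^3)⁻¹ := by
    funext s; rw [div_eq_mul_inv]
  rw [e2]; refine h3.congr_deriv ?_; push_cast; field_simp; ring


lemma hd_q2 (d t : ℝ) (h : d + t ≠ 0) :
    HasDerivAt (fun s => 1/(d+s)^2) (-2/(d+t)^3) t := by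
  have h1 : HasDerivAt (fun s : ℝ => d + s) 1 t := (hasDerivAt_id t).const_add d
  have h3 := (h1.fun_pow 2).fun_inv (pow_ne_zero 2 h)
  have e2 : (fun s : ℝ => 1/(d+s)^2) = fun s => ((d+s)^2)⁻¹ := by
    funext s; rw [one_div]
  rw [e2]; refine h3.congr_deriv ?_; push_cast; field_simp

lemma hd_q3 (d t : ℝ) (h : d + t ≠ 0) :
    HasDerivAt (fun s => -2/(d+s)^3) (6/(d+t)^4) t := by
  have h1 : HasDerivAt (fun s : ℝ => d + s) 1 t := (hasDerivAt_id t).const_add d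
  have h3 := (((h1.fun_pow 3).fun_inv (pow_ne_zero 3 h)).const_mul (-2))
  have e2 : (fun s : ℝ => -2/(d+s)^3) = fun s => (-2) * ((d+s)^3)⁻¹ := by
    funext s; rw [div_eq_mul_inv]
  rw [e2]; refine h3.congr_deriv ?_; push_cast; field_simp; ring

lemma Upos (a b c : ℝ) (h : a - b ≠ 0) : 0 < Ucol a b c := by
  have h2 : 0 < (a-b)^2 := lt_of_le_of_ne (sq_nonneg _) (Ne.symm (pow_ne_zero 2 h))
  have p1 : 0 < 1/(a-b)^2 := one_div_pos.mpr h2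
  have p2 : 0 ≤ 1/(a+b)^2 := by positivity
  have p3 : 0 ≤ 1/(a-c)^2 := by positivity
  have p4 : 0 ≤ 1/(a+c)^2 := by positivity
  have p5 : 0 ≤ 1/(b-c)^2 := by positivity
  have p6 : 0 ≤ 1/(b+c)^2 := by positivity
  unfold Ucol; linarith

lemma hU1 (a b c : ℝ) (h1 : a - b ≠ 0) (h2 : a + b ≠ 0) (h3 : a - c ≠ 0) (h4 : a + c ≠ 0) :
    HasDerivAt (fun s => Ucol s b c) (Vc1 a b c) a := by
  unfold Ucol Vc1
  exact ((((((hd_m2 b a h1).add (hd_p2 b a h2)).add (hd_m2 c a h3)).add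
    (hd_p2 c a h4)).add_const (1/(b-c)^2)).add_const (1/(b+c)^2))

lemma hU2 (a b c : ℝ) (h1 : a - b ≠ 0) (h2 : a + b ≠ 0) (h5 : b - c ≠ 0) (h6 : b + c ≠ 0) :
    HasDerivAt (fun s => Ucol a s c) (Vc2 a b c) b := by
  unfold Ucol Vc2
  exact (((((hd_c2 a b h1).add (hd_q2 a b h2)).add_const (1/(a-c)^2)).add_const
    (1/(a+c)^2)).add (hd_m2 c b h5)).add (hd_p2 c b h6)

lemma hU3 (a b c : ℝ) (h3 : a - c ≠ 0) (h4 : a + c ≠ 0) (h5 : b - c ≠ 0) (h6 : b + c ≠ 0) :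
    HasDerivAt (fun s => Ucol a b s) (Vc3 a b c) c := by
  unfold Ucol Vc3
  exact ((((hd_c2 a c h3).const_add (1/(a-b)^2 + 1/(a+b)^2)).add (hd_q2 a c h4)).add
    (hd_c2 b c h5)).add (hd_q2 b c h6)

lemma hV1 (a b c : ℝ) (h1 : a - b ≠ 0) (h2 : a + b ≠ 0) (h3 : a - c ≠ 0) (h4 : a + c ≠ 0) :
    HasDerivAt (fun s => Vc1 s b c) (Ac1 a b c) a := by
  unfold Vc1 Ac1
  exact (((hd_m3 b a h1).add (hd_p3 b a h2)).add (hd_m3 c a h3)).add (hd_p3 c a h4)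

lemma hV2 (a b c : ℝ) (h1 : a - b ≠ 0) (h2 : a + b ≠ 0) (h5 : b - c ≠ 0) (h6 : b + c ≠ 0) :
    HasDerivAt (fun s => Vc2 a s c) (Ac2 a b c) b := by
  unfold Vc2 Ac2
  exact (((hd_c3 a b h1).add (hd_q3 a b h2)).add (hd_m3 c b h5)).add (hd_p3 c b h6)

lemma hV3 (a b c : ℝ) (h3 : a - c ≠ 0) (h4 : a + c ≠ 0) (h5 : b - c ≠ 0) (h6 : b + c ≠ 0) :
    HasDerivAt (fun s => Vc3 a b s) (Ac3 a b c) c := by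
  unfold Vc3 Ac3
  exact (((hd_c3 a c h3).add (hd_q3 a c h4)).add (hd_c3 b c h5)).add (hd_q3 b c h6)

set_option maxHeartbeats 1000000 in
lemma poly_key (u v w x y z : ℝ) (hu : u ≠ 0) :
    0 < (6*(u^4+v^4+w^4+x^4) + 6*(u^4+v^4+y^4+z^4) + 6*(w^4+x^4+y^4+z^4)) *
        (u^2+v^2+w^2+x^2+y^2+z^2)
      - ((-2*(u^3+v^3+w^3+x^3))^2 + (-2*(-u^3+v^3+y^3+z^3))^2
          + (-2*(-w^3+x^3-y^3+z^3))^2) := by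
  have key : (6*(u^4+v^4+w^4+x^4) + 6*(u^4+v^4+y^4+z^4) + 6*(w^4+x^4+y^4+z^4)) *
        (u^2+v^2+w^2+x^2+y^2+z^2)
      - ((-2*(u^3+v^3+w^3+x^3))^2 + (-2*(-u^3+v^3+y^3+z^3))^2
          + (-2*(-w^3+x^3-y^3+z^3))^2)
      = 4*u^6 + 4*v^6 + 4*w^6 + 4*x^6 + 4*y^6 + 4*z^6 + 4*(u^2*w - u*w^2)^2 + 4*(u^2*x - u*x^2)^2 + 4*(u^2*y + u*y^2)^2 + 4*(u^2*z + u*z^2)^2 + 4*(v^2*w - v*w^2)^2 + 4*(v^2*x - v*x^2)^2 + 4*(v^2*y - v*y^2)^2 + 4*(v^2*z - v*z^2)^2 + 4*(w^2*y - w*y^2)^2 + 4*(w^2*z + w*z^2)^2 + 4*(x^2*y + x*y^2)^2 + 4*(x^2*z - x*z^2)^2 + 12*y^2*z^4 + 12*y^4*z^2 + 8*x^2*z^4 + 8*x^2*y^4 + 8*x^4*z^2 + 8*x^4*y^2 + 8*w^2*z^4 + 8*w^2*y^4 + 12*w^2*x^4 + 8*w^4*z^2 + 8*w^4*y^2 +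 12*w^4*x^2 + 8*v^2*z^4 + 8*v^2*y^4 + 8*v^2*x^4 + 8*v^2*w^4 + 8*v^4*z^2 + 8*v^4*y^2 + 8*v^4*x^2 + 8*v^4*w^2 + 8*u^2*z^4 + 8*u^2*y^4 + 8*u^2*x^4 + 8*u^2*w^4 + 12*u^2*v^4 + 8*u^4*z^2 + 8*u^4*y^2 + 8*u^4*x^2 + 8*u^4*w^2 + 12*u^4*v^2 := by
    ring
  rw [key]
  positivity

theorem laplacian_log_Ucol_pos (ξ₁ ξ₂ ξ₃ : ℝ)
    (h1 : ξ₁ - ξ₂ ≠ 0) (h2 : ξ₁ + ξ₂ ≠ 0) (h3 : ξ₁ - ξ₃ ≠ 0) (h4 : ξ₁ + ξ₃ ≠ 0)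
    (h5 : ξ₂ - ξ₃ ≠ 0) (h6 : ξ₂ + ξ₃ ≠ 0) :
    0 < lap3 (fun a b c => Real.log (Ucol a b c)) ξ₁ ξ₂ ξ₃ := by
  have key1 : deriv (fun t => deriv (fun s => Real.log (Ucol s ξ₂ ξ₃)) t) ξ₁
      = (Ac1 ξ₁ ξ₂ ξ₃ * Ucol ξ₁ ξ₂ ξ₃ - Vc1 ξ₁ ξ₂ ξ₃ * Vc1 ξ₁ ξ₂ ξ₃) / Ucol ξ₁ ξ₂ ξ₃ ^ 2 := by
    have o1 : ∀ᶠ t in nhds ξ₁, t - ξ₂ ≠ 0 :=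
      ((continuous_id.sub continuous_const).continuousAt).eventually_ne h1
    have o2 : ∀ᶠ t in nhds ξ₁, t + ξ₂ ≠ 0 :=
      ((continuous_id.add continuous_const).continuousAt).eventually_ne h2
    have o3 : ∀ᶠ t in nhds ξ₁, t - ξ₃ ≠ 0 :=
      ((continuous_id.sub continuous_const).continuousAt).eventually_ne h3
    have o4 : ∀ᶠ t in nhds ξ₁, t + ξ₃ ≠ 0 :=
      ((continuous_id.add continuous_const).continuousAt).eventually_ne h4
    have ev : (fun t => deriv (fun s => Real.log (Ucol s ξ₂ ξ₃)) t)
        =ᶠ[nhds ξ₁] fun t => Vc1 t ξ₂ ξ₃ / Ucol t ξ₂ ξ₃ := by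
      filter_upwards [o1, o2, o3, o4] with t t1 t2 t3 t4
      exact ((hU1 t ξ₂ ξ₃ t1 t2 t3 t4).log (Upos t ξ₂ ξ₃ t1).ne').deriv
    rw [ev.deriv_eq]
    exact ((hV1 ξ₁ ξ₂ ξ₃ h1 h2 h3 h4).div (hU1 ξ₁ ξ₂ ξ₃ h1 h2 h3 h4)
      (Upos ξ₁ ξ₂ ξ₃ h1).ne').deriv
  have key2 : deriv (fun t => deriv (fun s => Real.log (Ucol ξ₁ s ξ₃)) t) ξ₂
      = (Ac2 ξ₁ ξ₂ ξ₃ * Ucol ξ₁ ξ₂ ξ₃ - Vc2 ξ₁ ξ₂ ξ₃ * Vc2 ξ₁ ξ₂ ξ₃) / Ucol ξ₁ ξ₂ ξ₃ ^ 2 := by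
    have o1 : ∀ᶠ t in nhds ξ₂, ξ₁ - t ≠ 0 :=
      ((continuous_const.sub continuous_id).continuousAt).eventually_ne h1
    have o2 : ∀ᶠ t in nhds ξ₂, ξ₁ + t ≠ 0 :=
      ((continuous_const.add continuous_id).continuousAt).eventually_ne h2
    have o3 : ∀ᶠ t in nhds ξ₂, t - ξ₃ ≠ 0 :=
      ((continuous_id.sub continuous_const).continuousAt).eventually_ne h5
    have o4 : ∀ᶠ t in nhds ξ₂, t + ξ₃ ≠ 0 :=
      ((continuous_id.add continuous_const).continuousAt).eventually_ne h6
    have ev : (fun t => deriv (fun s => Real.log (Ucol ξ₁ s ξ₃)) t)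
        =ᶠ[nhds ξ₂] fun t => Vc2 ξ₁ t ξ₃ / Ucol ξ₁ t ξ₃ := by
      filter_upwards [o1, o2, o3, o4] with t t1 t2 t3 t4
      exact ((hU2 ξ₁ t ξ₃ t1 t2 t3 t4).log (Upos ξ₁ t ξ₃ t1).ne').deriv
    rw [ev.deriv_eq]
    exact ((hV2 ξ₁ ξ₂ ξ₃ h1 h2 h5 h6).div (hU2 ξ₁ ξ₂ ξ₃ h1 h2 h5 h6)
      (Upos ξ₁ ξ₂ ξ₃ h1).ne').deriv
  have key3 : deriv (fun t => deriv (fun s => Real.log (Ucol ξ₁ ξ₂ s)) t) ξ₃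
      = (Ac3 ξ₁ ξ₂ ξ₃ * Ucol ξ₁ ξ₂ ξ₃ - Vc3 ξ₁ ξ₂ ξ₃ * Vc3 ξ₁ ξ₂ ξ₃) / Ucol ξ₁ ξ₂ ξ₃ ^ 2 := by
    have o1 : ∀ᶠ t in nhds ξ₃, ξ₁ - t ≠ 0 :=
      ((continuous_const.sub continuous_id).continuousAt).eventually_ne h3
    have o2 : ∀ᶠ t in nhds ξ₃, ξ₁ + t ≠ 0 :=
      ((continuous_const.add continuous_id).continuousAt).eventually_ne h4
    have o3 : ∀ᶠ t in nhds ξ₃, ξ₂ - t ≠ 0 :=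
      ((continuous_const.sub continuous_id).continuousAt).eventually_ne h5
    have o4 : ∀ᶠ t in nhds ξ₃, ξ₂ + t ≠ 0 :=
      ((continuous_const.add continuous_id).continuousAt).eventually_ne h6
    have ev : (fun t => deriv (fun s => Real.log (Ucol ξ₁ ξ₂ s)) t)
        =ᶠ[nhds ξ₃] fun t => Vc3 ξ₁ ξ₂ t / Ucol ξ₁ ξ₂ t := by
      filter_upwards [o1, o2, o3, o4] with t t1 t2 t3 t4
      exact ((hU3 ξ₁ ξ₂ t t1 t2 t3 t4).log (Upos ξ₁ ξ₂ t h1).ne').deriv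
    rw [ev.deriv_eq]
    exact ((hV3 ξ₁ ξ₂ ξ₃ h3 h4 h5 h6).div (hU3 ξ₁ ξ₂ ξ₃ h3 h4 h5 h6)
      (Upos ξ₁ ξ₂ ξ₃ h1).ne').deriv
  show 0 < deriv (fun t => deriv (fun s => Real.log (Ucol s ξ₂ ξ₃)) t) ξ₁ +
      deriv (fun t => deriv (fun s => Real.log (Ucol ξ₁ s ξ₃)) t) ξ₂ +
      deriv (fun t => deriv (fun s => Real.log (Ucol ξ₁ ξ₂ s)) t) ξ₃
  rw [key1, key2, key3, ← add_div, ← add_div]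
  apply div_pos ?_ (pow_pos (Upos ξ₁ ξ₂ ξ₃ h1) 2)
  have hp := poly_key (1/(ξ₁-ξ₂)) (1/(ξ₁+ξ₂)) (1/(ξ₁-ξ₃)) (1/(ξ₁+ξ₃)) (1/(ξ₂-ξ₃))
    (1/(ξ₂+ξ₃)) (one_div_ne_zero h1)
  refine hp.trans_le (le_of_eq ?_)
  unfold Ucol Vc1 Vc2 Vc3 Ac1 Ac2 Ac3
  simp only [div_eq_mul_inv, ← inv_pow, one_mul]
  ring
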